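/- For every n ∈ ℕ with n ≥ 1 and every z ≥ 0, ∫₀^∞ [ (1/x − 1/(x+z))·Liₙ(−x−z) − (1/x)·Liₙ(−z/(x+1)) ] dx = n·Li_{n+1}(−z). -/

import Mathlib

/-- The real polylogarithm, defined on `(-∞, 1)` by `Li₀(w) = w/(1−w)` and
`Li_{n+1}(w) = ∫₀^w Liₙ(t)/t dt` (so `Li₁(w) = −log(1−w)`). -/
noncomputable def polylog : ℕ → ℝ → ℝ
  | 0, w => w / (1 - w)
  | n + 1, w => ∫ t in (0 : ℝ)..w, polylog n t / t


open Set MeasureTheory Filter Topology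

lemma polylog_zero (n : ℕ) : polylog n 0 = 0 := by
  cases n with
  | zero => simp [polylog]
  | succ n => simp [polylog]

lemma polylog_succ_def (n : ℕ) (w : ℝ) :
    polylog (n + 1) w = ∫ t in (0 : ℝ)..w, polylog n t / t := rfl

lemma abs_polylog_le (n : ℕ) : ∀ t : ℝ, t ≤ 0 → |polylog n t| ≤ |t| := by
  induction n with
  | zero =>
    intro t ht
    show |t / (1 - t)| ≤ |t|
    rw [abs_div]
    rcases eq_or_lt_of_le ht with h | h
    · subst h; simp
    · have h1 : (1 : ℝ) ≤ |1 - t| := by rw [abs_of_pos (by linarith)]; linarith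
      calc |t| / |1 - t| ≤ |t| / 1 := by
            apply div_le_div_of_nonneg_left (abs_nonneg t) one_pos h1
        _ = |t| := by ring
  | succ n ih =>
    intro t ht
    have hb : ∀ s ∈ Set.uIoc (0:ℝ) t, ‖polylog n s / s‖ ≤ 1 := by
      intro s hs
      have hs' : s ∈ Set.Ioc t 0 := by rwa [Set.uIoc_comm, Set.uIoc_of_le ht] at hs
      rcases eq_or_lt_of_le hs'.2 with h | h
      · simp [h, polylog_zero]
      · rw [Real.norm_eq_abs, abs_div, div_le_one (abs_pos.mpr (ne_of_lt h))]
        exact ih s (le_of_lt h)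
    have := intervalIntegral.norm_integral_le_of_norm_le_const hb
    rw [polylog_succ_def]
    simpa using this

lemma div_self_norm_le (n : ℕ) {s : ℝ} (hs : s ≤ 0) : ‖polylog n s / s‖ ≤ 1 := by
  rcases eq_or_lt_of_le hs with h | h
  · subst h; simp [polylog_zero]
  · rw [Real.norm_eq_abs, abs_div, div_le_one (abs_pos.mpr (ne_of_lt h))]
    exact abs_polylog_le n s hs

lemma polylog_div_integrableOn_of (n : ℕ) (hc : ContinuousOn (polylog n) (Iic 0))
    {a : ℝ} (ha : a ≤ 0) :
    IntegrableOn (fun t => polylog n t / t) (Ioc a 0) := by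
  have hm : AEStronglyMeasurable (fun t => polylog n t / t) (volume.restrict (Ioc a 0)) := by
    have hco : ContinuousOn (fun t => polylog n t / t) (Ioo a 0) := by
      apply ContinuousOn.div (hc.mono (fun t ht => le_of_lt ht.2)) continuousOn_id
      exact fun t ht => ne_of_lt ht.2
    have := hco.aestronglyMeasurable (μ := volume) measurableSet_Ioo
    rwa [Measure.restrict_congr_set Ioo_ae_eq_Ioc] at this
  apply Integrable.mono' (g := fun _ => (1:ℝ))
    (integrableOn_const measure_Ioc_lt_top.ne) hm
  filter_upwards [ae_restrict_mem measurableSet_Ioc] with t ht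
  exact div_self_norm_le n ht.2

lemma polylog_continuousOn (n : ℕ) : ContinuousOn (polylog n) (Iic 0) := by
  induction n with
  | zero =>
    apply ContinuousOn.div continuousOn_id (by fun_prop)
    intro t ht
    simp only [Set.mem_Iic] at ht
    intro h; linarith [h]
  | succ n ih =>
    have hii : ∀ b : ℝ, b ≤ 0 → IntervalIntegrable (fun t => polylog n t / t) volume 0 b := by
      intro b hb
      rw [intervalIntegrable_iff]
      apply (polylog_div_integrableOn_of n ih hb).mono_set
      rw [Set.uIoc_comm, Set.uIoc_of_le hb]
    have key : ∀ a ∈ Iic (0:ℝ), ∀ b ∈ Iic (0:ℝ),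
        |polylog (n+1) b - polylog (n+1) a| ≤ |b - a| := by
      intro a ha b hb
      have heq : polylog (n+1) b - polylog (n+1) a
          = ∫ t in a..b, polylog n t / t := by
        rw [polylog_succ_def, polylog_succ_def]
        exact intervalIntegral.integral_interval_sub_left (hii b hb) (hii a ha)
      rw [heq]
      have hbd : ∀ s ∈ Set.uIoc a b, ‖polylog n s / s‖ ≤ 1 := by
        intro s hs
        have : s ≤ 0 := le_trans (Set.uIoc_subset_uIcc hs).2 (by
          simp only [Set.uIcc, Set.mem_Iic] at *
          exact max_le ha hb)
        exact div_self_norm_le n this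
      have := intervalIntegral.norm_integral_le_of_norm_le_const hbd
      simpa using this
    have hl : LipschitzOnWith 1 (polylog (n+1)) (Iic 0) := by
      rw [lipschitzOnWith_iff_dist_le_mul]
      intro x hx y hy
      rw [Real.dist_eq, Real.dist_eq]
      simpa using key y hy x hx
    exact hl.continuousOn

lemma polylog_div_intervalIntegrable (n : ℕ) {a b : ℝ} (ha : a ≤ 0) (hb : b ≤ 0) :
    IntervalIntegrable (fun t => polylog n t / t) volume a b := by
  rw [intervalIntegrable_iff]
  apply (polylog_div_integrableOn_of n (polylog_continuousOn n)
    (min_le_of_left_le ha)).mono_set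
  intro t ht
  exact ⟨ht.1, le_trans ht.2 (max_le ha hb)⟩

lemma polylog_hasDerivAt (n : ℕ) {w : ℝ} (hw : w < 0) :
    HasDerivAt (polylog (n+1)) (polylog n w / w) w := by
  have hco : ContinuousOn (fun t => polylog n t / t) (Iio 0) := by
    apply ContinuousOn.div ((polylog_continuousOn n).mono Iio_subset_Iic_self)
      continuousOn_id (fun t ht => ne_of_lt ht)
  have h1 : HasDerivAt (fun u => ∫ t in (0:ℝ)..u, polylog n t / t) (polylog n w / w) w :=
    intervalIntegral.integral_hasDerivAt_right
      (polylog_div_intervalIntegrable n le_rfl (le_of_lt hw))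
      (hco.stronglyMeasurableAtFilter isOpen_Iio w hw)
      (hco.continuousAt (isOpen_Iio.mem_nhds hw))
  exact h1

/-- derivative of `s ↦ polylog n (-s)` -/
noncomputable def pld : ℕ → ℝ → ℝ
  | 0, t => -(1 / (1 + t) ^ 2)
  | n + 1, t => polylog n (-t) / t

lemma hasDerivAt_polylog_neg (n : ℕ) {s : ℝ} (hs : 0 < s) :
    HasDerivAt (fun u => polylog n (-u)) (pld n s) s := by
  cases n with
  | zero =>
    have h1 : HasDerivAt (fun u : ℝ => -u) (-1) s := (hasDerivAt_id s).neg
    have h2 : HasDerivAt (fun u : ℝ => 1 - -u) 1 s := by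
      simpa using ((hasDerivAt_id s).neg.neg.const_add 1)
    have hne : (1 : ℝ) - -s ≠ 0 := ne_of_gt (by linarith)
    have := h1.div h2 hne
    refine this.congr_deriv (Eq.symm ?_)
    show -(1 / (1 + s) ^ 2) = _
    field_simp
    try ring
  | succ n =>
    have h1 : HasDerivAt (fun u : ℝ => -u) (-1) s := (hasDerivAt_id s).neg
    have h2 := (polylog_hasDerivAt n (by linarith : -s < 0)).comp s h1
    refine h2.congr_deriv (Eq.symm ?_)
    show polylog n (-s) / s = _
    rw [div_neg, neg_mul, mul_neg_one, neg_neg]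

lemma pld_norm_le (n : ℕ) {s : ℝ} (hs : 0 < s) : |pld n s| ≤ 1 := by
  cases n with
  | zero =>
    show |(-(1 / (1 + s) ^ 2))| ≤ 1
    rw [abs_neg, abs_of_nonneg (by positivity)]
    rw [div_le_one (by positivity)]
    nlinarith
  | succ n =>
    show |polylog n (-s) / s| ≤ 1
    rw [abs_div, abs_of_pos hs, div_le_one hs]
    calc |polylog n (-s)| ≤ |(-s)| := abs_polylog_le n (-s) (by linarith)
      _ = s := by rw [abs_neg, abs_of_pos hs]

lemma abs_polylog_neg_le {n : ℕ} {s : ℝ} (hs : 0 ≤ s) : |polylog n (-s)| ≤ s := by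
  calc |polylog n (-s)| ≤ |(-s)| := abs_polylog_le n (-s) (by linarith)
    _ = s := by rw [abs_neg, abs_of_nonneg hs]

lemma polylog_neg_eq (n : ℕ) (s : ℝ) :
    polylog (n+1) (-s) = ∫ x in (0:ℝ)..s, polylog n (-x) / x := by
  rw [polylog_succ_def]
  have h1 : ∀ x : ℝ, polylog n (-x) / x = -(polylog n (-x) / (-x)) := by
    intro x; rw [div_neg, neg_neg]
  have h2 : (∫ x in (0:ℝ)..s, polylog n (-x) / (-x))
      = ∫ t in (-s)..(-(0:ℝ)), polylog n t / t :=
    intervalIntegral.integral_comp_neg (fun t => polylog n t / t)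
  calc (∫ t in (0:ℝ)..(-s), polylog n t / t)
      = -(∫ t in (-s)..(-(0:ℝ)), polylog n t / t) := by
        rw [intervalIntegral.integral_symm]; norm_num
    _ = -(∫ x in (0:ℝ)..s, polylog n (-x) / (-x)) := by rw [h2]
    _ = ∫ x in (0:ℝ)..s, -(polylog n (-x) / (-x)) := by
        rw [intervalIntegral.integral_neg]
    _ = ∫ x in (0:ℝ)..s, polylog n (-x) / x := by
        apply intervalIntegral.integral_congr
        intro x _
        simp [div_neg]

lemma abs_polylog_neg_le_sqrt (n : ℕ) : ∀ s : ℝ, 0 ≤ s →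
    |polylog n (-s)| ≤ 2^(n+1) * Real.sqrt s := by
  induction n with
  | zero =>
    intro s hs
    show |(-s) / (1 - -s)| ≤ _
    have h1 : (-s) / (1 - -s) = -(s / (1+s)) := by ring_nf
    rw [h1, abs_neg, abs_of_nonneg (by positivity)]
    have hr := Real.sq_sqrt hs
    have hr0 := Real.sqrt_nonneg s
    rw [div_le_iff₀ (by positivity)]
    have h2 : (2:ℝ)^(0+1) = 2 := by norm_num
    rw [h2]
    nlinarith [mul_nonneg hr0 (sq_nonneg (Real.sqrt s - 1/4)), hr0]
  | succ n ih =>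
    intro s hs
    rw [polylog_neg_eq]
    have hbd : ∀ᵐ x ∂(volume.restrict (Set.uIoc 0 s)),
        ‖polylog n (-x) / x‖ ≤ 2^(n+1) * x ^ (-(1/2) : ℝ) := by
      filter_upwards [ae_restrict_mem measurableSet_uIoc] with x hx
      have hx' : x ∈ Set.Ioc 0 s := by rwa [Set.uIoc_of_le hs] at hx
      have hx0 : 0 < x := hx'.1
      rw [Real.norm_eq_abs, abs_div, abs_of_pos hx0]
      have h1 : |polylog n (-x)| ≤ 2^(n+1) * Real.sqrt x := ih x (le_of_lt hx0)
      have h2 : Real.sqrt x / x = x ^ (-(1/2) : ℝ) := by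
        have hsub := Real.rpow_sub hx0 (1/2) 1
        rw [Real.rpow_one] at hsub
        rw [Real.sqrt_eq_rpow, ← hsub]
        norm_num
      calc |polylog n (-x)| / x ≤ 2^(n+1) * Real.sqrt x / x := by
            gcongr
        _ = 2^(n+1) * (Real.sqrt x / x) := by ring
        _ = 2^(n+1) * x ^ (-(1/2) : ℝ) := by rw [h2]
    have hint : IntervalIntegrable (fun x => 2^(n+1) * x ^ (-(1/2) : ℝ)) volume 0 s :=
      (intervalIntegral.intervalIntegrable_rpow' (by norm_num)).const_mul _
    have := intervalIntegral.norm_integral_le_abs_of_norm_le hbd hint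
    rw [Real.norm_eq_abs] at this
    apply le_trans this
    rw [intervalIntegral.integral_const_mul, integral_rpow (Or.inl (by norm_num))]
    rw [Real.zero_rpow (by norm_num)]
    have : (-(1/2) : ℝ) + 1 = 1/2 := by norm_num
    rw [this]
    rw [abs_mul, abs_of_nonneg (by positivity : (0:ℝ) ≤ 2^(n+1))]
    have h3 : |(s ^ ((1:ℝ)/2) - 0) / (1/2)| = 2 * s ^ ((1:ℝ)/2) := by
      rw [sub_zero, abs_of_nonneg (by positivity)]
      ring
    rw [h3, Real.sqrt_eq_rpow, pow_succ]
    ring_nf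
    exact le_rfl

lemma contOn_polylog_comp {α : Type*} [TopologicalSpace α] {k : ℕ} {s : Set α} {g : α → ℝ}
    (hg : ContinuousOn g s) (h : ∀ x ∈ s, g x ≤ 0) :
    ContinuousOn (fun x => polylog k (g x)) s :=
  (polylog_continuousOn k).comp hg h

lemma rpow_half_eq {x : ℝ} (hx : 0 < x) : x ^ (-(1/2) : ℝ) = (Real.sqrt x)⁻¹ := by
  rw [Real.rpow_neg hx.le, Real.sqrt_eq_rpow]

lemma rpow_threehalf_eq {x : ℝ} (hx : 0 < x) :
    x ^ (-(3/2) : ℝ) = (Real.sqrt x)⁻¹ * x⁻¹ := by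
  rw [show (-(3/2) : ℝ) = -(1/2) + (-1) by norm_num, Real.rpow_add hx,
    Real.rpow_neg_one, rpow_half_eq hx]

lemma phi_integrable :
    IntegrableOn (fun x => if x ≤ 1 then (Real.sqrt x)⁻¹ else (Real.sqrt x)⁻¹ * x⁻¹)
      (Ioi (0:ℝ)) := by
  have h1 : IntegrableOn (fun x : ℝ => x ^ (-(1/2) : ℝ)) (Ioc (0:ℝ) 1) :=
    (intervalIntegral.intervalIntegrable_rpow' (by norm_num : (-1:ℝ) < -(1/2))
      (a := 0) (b := 1)).1
  have h2 : IntegrableOn (fun x : ℝ => x ^ (-(3/2) : ℝ)) (Ioi (1:ℝ)) :=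
    integrableOn_Ioi_rpow_of_lt (by norm_num) one_pos
  have h1' : IntegrableOn (fun x => if x ≤ 1 then (Real.sqrt x)⁻¹ else (Real.sqrt x)⁻¹ * x⁻¹)
      (Ioc (0:ℝ) 1) := h1.congr_fun (fun x hx => by
    beta_reduce; rw [if_pos hx.2, rpow_half_eq hx.1]) measurableSet_Ioc
  have h2' : IntegrableOn (fun x => if x ≤ 1 then (Real.sqrt x)⁻¹ else (Real.sqrt x)⁻¹ * x⁻¹)
      (Ioi (1:ℝ)) := h2.congr_fun (fun x (hx : 1 < x) => by
    beta_reduce; rw [if_neg (not_le.mpr hx), rpow_threehalf_eq (lt_trans one_pos hx)]) measurableSet_Ioi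
  have := h1'.union h2'
  rwa [Ioc_union_Ioi_eq_Ioi (by norm_num : (0:ℝ) ≤ 1)] at this

lemma psi_integrable (Z : ℝ) :
    IntegrableOn (fun z => (Real.sqrt z)⁻¹) (Ioc (0:ℝ) Z) := by
  rcases le_or_gt Z 0 with h | h
  · rw [Set.Ioc_eq_empty (by intro hh; linarith [hh])]
    exact integrableOn_empty
  · have h1 : IntegrableOn (fun z : ℝ => z ^ (-(1/2) : ℝ)) (Ioc (0:ℝ) Z) :=
      (intervalIntegral.intervalIntegrable_rpow' (by norm_num : (-1:ℝ) < -(1/2))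
        (a := 0) (b := Z)).1
    exact h1.congr_fun (fun x hx => by beta_reduce; rw [rpow_half_eq hx.1]) measurableSet_Ioc

lemma tail_hasDerivAt (n : ℕ) {z x : ℝ} (hxz : 0 < x + z) :
    HasDerivAt (fun x => -(polylog (n+1) (-(x+z)) / (x+z)))
      ((polylog (n+1) (-(x+z)) - polylog n (-(x+z))) / (x+z)^2) x := by
  have h1 : HasDerivAt (fun x : ℝ => x + z) 1 x := (hasDerivAt_id x).add_const z
  have h2 : HasDerivAt (fun x => polylog (n+1) (-(x+z))) (pld (n+1) (x+z) * 1) x := by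
    have := (hasDerivAt_polylog_neg (n+1) hxz).comp x h1; exact this
  have h3 := (h2.div h1 (ne_of_gt hxz)).neg
  refine h3.congr_deriv (Eq.symm ?_)
  show _ = -((pld (n+1) (x+z) * 1 * (x+z) - polylog (n+1) (-(x+z)) * 1) / (x+z)^2)
  show _ = -((polylog n (-(x+z)) / (x+z) * 1 * (x+z) - polylog (n+1) (-(x+z)) * 1) / (x+z)^2)
  field_simp
  try ring

lemma tail_tendsto (n : ℕ) {z : ℝ} (hz : 0 < z) :
    Tendsto (fun x => -(polylog (n+1) (-(x+z)) / (x+z))) atTop (𝓝 0) := by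
  apply squeeze_zero_norm' (a := fun x => 2^(n+2) * (x+z) ^ (-(1/2) : ℝ))
  · filter_upwards [eventually_ge_atTop (0:ℝ)] with x hx
    have hxz : 0 < x + z := by linarith
    rw [Real.norm_eq_abs, abs_neg, abs_div, abs_of_pos hxz]
    have h1 : |polylog (n+1) (-(x+z))| ≤ 2^(n+2) * Real.sqrt (x+z) := by
      have h := abs_polylog_neg_le_sqrt (n+1) (x+z) hxz.le
      calc |polylog (n+1) (-(x+z))| ≤ 2^(n+1+1) * Real.sqrt (x+z) := h
        _ = 2^(n+2) * Real.sqrt (x+z) := by norm_num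
    calc |polylog (n+1) (-(x+z))| / (x+z) ≤ 2^(n+2) * Real.sqrt (x+z) / (x+z) := by gcongr
      _ = 2^(n+2) * (x+z) ^ (-(1/2) : ℝ) := by
          rw [rpow_half_eq hxz, mul_div_assoc]
          congr 1
          rw [div_eq_iff (ne_of_gt hxz), inv_mul_eq_div,
            eq_div_iff (ne_of_gt (Real.sqrt_pos.mpr hxz))]
          exact Real.mul_self_sqrt hxz.le
  · have h1 : Tendsto (fun x : ℝ => x + z) atTop atTop :=
      tendsto_atTop_add_const_right _ z tendsto_id
    have h2 := (tendsto_rpow_neg_atTop (by norm_num : (0:ℝ) < 1/2)).comp h1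
    have := h2.const_mul ((2:ℝ)^(n+2))
    simpa using this

lemma tail_integrableOn (n : ℕ) {z : ℝ} (hz : 0 < z) :
    IntegrableOn (fun x => (polylog (n+1) (-(x+z)) - polylog n (-(x+z))) / (x+z)^2)
      (Ioi (0:ℝ)) := by
  set c : ℝ := 2^(n+2) + 2^(n+1) with hc
  have hc0 : 0 < c := by positivity
  -- dominating function
  have hdom : IntegrableOn
      (fun x => if x ≤ 1 then c / (z * Real.sqrt z) else c * ((Real.sqrt x)⁻¹ * x⁻¹))
      (Ioi (0:ℝ)) := by
    have h1 : IntegrableOn (fun _ : ℝ => c / (z * Real.sqrt z)) (Ioc (0:ℝ) 1) :=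
      integrableOn_const measure_Ioc_lt_top.ne
    have h2 : IntegrableOn (fun x : ℝ => c * ((Real.sqrt x)⁻¹ * x⁻¹)) (Ioi (1:ℝ)) := by
      apply Integrable.const_mul
      exact (phi_integrable.mono_set (Ioi_subset_Ioi (by norm_num))).congr_fun
        (fun x (hx : 1 < x) => by beta_reduce; rw [if_neg (not_le.mpr hx)]) measurableSet_Ioi
    have h1' : IntegrableOn
        (fun x => if x ≤ 1 then c / (z * Real.sqrt z) else c * ((Real.sqrt x)⁻¹ * x⁻¹))
        (Ioc (0:ℝ) 1) := h1.congr_fun (fun x hx => by rw [if_pos hx.2]) measurableSet_Ioc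
    have h2' : IntegrableOn
        (fun x => if x ≤ 1 then c / (z * Real.sqrt z) else c * ((Real.sqrt x)⁻¹ * x⁻¹))
        (Ioi (1:ℝ)) := h2.congr_fun (fun x (hx : 1 < x) => by
      rw [if_neg (not_le.mpr hx)]) measurableSet_Ioi
    have := h1'.union h2'
    rwa [Ioc_union_Ioi_eq_Ioi (by norm_num : (0:ℝ) ≤ 1)] at this
  apply Integrable.mono' hdom
  · -- measurability
    apply ContinuousOn.aestronglyMeasurable _ measurableSet_Ioi
    apply ContinuousOn.div
    · apply ContinuousOn.sub
      · exact contOn_polylog_comp (by fun_prop) (fun x hx => by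
          simp only [Set.mem_Ioi] at hx; linarith)
      · exact contOn_polylog_comp (by fun_prop) (fun x hx => by
          simp only [Set.mem_Ioi] at hx; linarith)
    · fun_prop
    · intro x hx
      simp only [Set.mem_Ioi] at hx
      positivity
  · filter_upwards [ae_restrict_mem measurableSet_Ioi] with x hx
    simp only [Set.mem_Ioi] at hx
    have hxz : 0 < x + z := by linarith
    have hnum : |polylog (n+1) (-(x+z)) - polylog n (-(x+z))| ≤ c * Real.sqrt (x+z) := by
      apply le_trans (abs_sub _ _)
      have b1 := abs_polylog_neg_le_sqrt (n+1) (x+z) hxz.le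
      have b2 := abs_polylog_neg_le_sqrt n (x+z) hxz.le
      rw [hc]; ring_nf; ring_nf at b1 b2; nlinarith [Real.sqrt_nonneg (x+z)]
    rw [Real.norm_eq_abs, abs_div, abs_of_pos (by positivity : (0:ℝ) < (x+z)^2)]
    have key : |polylog (n+1) (-(x+z)) - polylog n (-(x+z))| / (x+z)^2
        ≤ c / ((x+z) * Real.sqrt (x+z)) := by
      rw [div_le_div_iff₀ (by positivity) (by positivity)]
      calc |polylog (n+1) (-(x+z)) - polylog n (-(x+z))| * ((x+z) * Real.sqrt (x+z))
          ≤ (c * Real.sqrt (x+z)) * ((x+z) * Real.sqrt (x+z)) := by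
            apply mul_le_mul_of_nonneg_right hnum (by positivity)
        _ = c * (x+z)^2 := by
            have hss := Real.mul_self_sqrt hxz.le
            linear_combination (c * (x+z)) * hss
    apply le_trans key
    rcases le_or_gt x 1 with h | h
    · rw [if_pos h]
      have hs : Real.sqrt z ≤ Real.sqrt (x+z) := Real.sqrt_le_sqrt (by linarith)
      have hzz : 0 < z * Real.sqrt z := by
        have := Real.sqrt_pos.mpr hz; positivity
      gcongr
      nlinarith [Real.sqrt_nonneg z, Real.sqrt_nonneg (x+z)]
    · rw [if_neg (not_le.mpr h)]
      have h0x : (0:ℝ) < x := by linarith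
      have hrw : c * ((Real.sqrt x)⁻¹ * x⁻¹) = c / (x * Real.sqrt x) := by
        rw [div_eq_mul_inv, mul_inv]; ring
      rw [hrw]
      have hs : Real.sqrt x ≤ Real.sqrt (x+z) := Real.sqrt_le_sqrt (by linarith)
      have hxx : 0 < x * Real.sqrt x := by
        have := Real.sqrt_pos.mpr h0x; positivity
      gcongr
      nlinarith [Real.sqrt_nonneg x, Real.sqrt_nonneg (x+z)]

lemma tail_eval (n : ℕ) {z : ℝ} (hz : 0 < z) :
    ∫ x in Ioi (0:ℝ), (polylog (n+1) (-(x+z)) - polylog n (-(x+z))) / (x+z)^2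
      = polylog (n+1) (-z) / z := by
  have hd : ∀ x ∈ Ioi (0:ℝ), HasDerivAt (fun x => -(polylog (n+1) (-(x+z)) / (x+z)))
      ((polylog (n+1) (-(x+z)) - polylog n (-(x+z))) / (x+z)^2) x :=
    fun x hx => tail_hasDerivAt n (by simp only [Set.mem_Ioi] at hx; linarith)
  have hcont : ContinuousWithinAt (fun x => -(polylog (n+1) (-(x+z)) / (x+z))) (Ici 0) 0 :=
    (tail_hasDerivAt n (by linarith : (0:ℝ) + z > 0)).continuousAt.continuousWithinAt
  have := MeasureTheory.integral_Ioi_of_hasDerivAt_of_tendsto hcont hd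
    (tail_integrableOn n hz) (tail_tendsto n hz)
  rw [this]
  norm_num
noncomputable def Ff (m : ℕ) (z x : ℝ) : ℝ :=
  (1/x - 1/(x+z)) * polylog m (-(x+z)) - (1/x) * polylog m (-(z/(x+1)))

noncomputable def Hd (n : ℕ) (x z : ℝ) : ℝ :=
  polylog (n+1) (-(x+z)) / (x+z)^2 + (1/x - 1/(x+z)) * (polylog n (-(x+z)) / (x+z))
    - (1/x) * (polylog n (-(z/(x+1))) / z)

lemma Ff_zero (m : ℕ) (x : ℝ) : Ff m 0 x = 0 := by
  simp [Ff, polylog_zero]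

lemma abs_triple (a b c : ℝ) : |a + b - c| ≤ |a| + |b| + |c| := by
  calc |a + b - c| ≤ |a + b| + |c| := abs_sub _ _
    _ ≤ |a| + |b| + |c| := by linarith [abs_add_le a b]

lemma hasDerivAt_Ff {n : ℕ} {x z : ℝ} (hx : 0 < x) (hz : 0 < z) :
    HasDerivAt (fun z => Ff (n+1) z x) (Hd n x z) z := by
  have hxz : 0 < x + z := by linarith
  have hA : HasDerivAt (fun z : ℝ => x + z) 1 z := by
    simpa using (hasDerivAt_id z).const_add x
  have hinv : HasDerivAt (fun z : ℝ => (x+z)⁻¹) (-1 / (x+z)^2) z :=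
    hA.inv (ne_of_gt hxz)
  have hcoef : HasDerivAt (fun z : ℝ => 1/x - 1/(x+z)) (-(-1/(x+z)^2)) z := by
    have := hinv.const_sub (1/x)
    simpa [one_div] using this
  have hP1 : HasDerivAt (fun z => polylog (n+1) (-(x+z)))
      (polylog n (-(x+z)) / (x+z)) z := by
    have h := (hasDerivAt_polylog_neg (n+1) hxz).comp z hA
    have e1 : ((fun u => polylog (n+1) (-u)) ∘ fun z : ℝ => x + z)
        = fun z => polylog (n+1) (-(x+z)) := rfl
    have e2 : pld (n+1) (x+z) * 1 = polylog n (-(x+z)) / (x+z) := by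
      show polylog n (-(x+z)) / (x+z) * 1 = _
      rw [mul_one]
    rw [e1, e2] at h
    exact h
  have hB : HasDerivAt (fun z : ℝ => z/(x+1)) (1/(x+1)) z := by
    simpa using (hasDerivAt_id z).div_const (x+1)
  have hzx : 0 < z/(x+1) := by positivity
  have hP2 : HasDerivAt (fun z => polylog (n+1) (-(z/(x+1))))
      (polylog n (-(z/(x+1))) / z) z := by
    have h := (hasDerivAt_polylog_neg (n+1) hzx).comp z hB
    have e1 : ((fun u => polylog (n+1) (-u)) ∘ fun z : ℝ => z/(x+1))
        = fun z => polylog (n+1) (-(z/(x+1))) := rfl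
    have e2 : pld (n+1) (z/(x+1)) * (1/(x+1)) = polylog n (-(z/(x+1))) / z := by
      show polylog n (-(z/(x+1))) / (z/(x+1)) * (1/(x+1)) = _
      have hne1 : (x+1) ≠ (0:ℝ) := by positivity
      have hnez : z ≠ 0 := ne_of_gt hz
      field_simp
    rw [e1, e2] at h
    exact h
  have hfinal := (hcoef.mul hP1).sub (hP2.const_mul (1/x))
  have hfun : (fun z => Ff (n+1) z x)
      = fun z => (1/x - 1/(x+z)) * polylog (n+1) (-(x+z))
        - (1/x) * polylog (n+1) (-(z/(x+1))) := rfl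
  rw [hfun]
  refine hfinal.congr_deriv (Eq.symm ?_)
  show Hd n x z = _
  unfold Hd
  ring

lemma Hd_eq {n : ℕ} {x z : ℝ} (hx : 0 < x) (hz : 0 < z) :
    Hd n x z = (1/z) * Ff n z x
      + (polylog (n+1) (-(x+z)) - polylog n (-(x+z))) / (x+z)^2 := by
  have hxz : (0:ℝ) < x + z := by linarith
  unfold Hd Ff
  field_simp
  ring

lemma Hd_continuousOn_z (n : ℕ) {x : ℝ} (hx : 0 < x) :
    ContinuousOn (Hd n x) (Ioi (0:ℝ)) := by
  unfold Hd
  have h1 : ContinuousOn (fun z => polylog (n+1) (-(x+z)) / (x+z)^2) (Ioi (0:ℝ)) := by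
    apply ContinuousOn.div
    · exact contOn_polylog_comp (by fun_prop) (fun z hz => by
        simp only [Set.mem_Ioi] at hz; linarith)
    · fun_prop
    · intro z hz; simp only [Set.mem_Ioi] at hz; positivity
  have h2 : ContinuousOn (fun z => (1/x - 1/(x+z)) * (polylog n (-(x+z)) / (x+z)))
      (Ioi (0:ℝ)) := by
    apply ContinuousOn.mul
    · apply ContinuousOn.sub continuousOn_const
      apply ContinuousOn.div continuousOn_const (by fun_prop)
      intro z hz; simp only [Set.mem_Ioi] at hz; positivity
    · apply ContinuousOn.div
      · exact contOn_polylog_comp (by fun_prop) (fun z hz => by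
          simp only [Set.mem_Ioi] at hz; linarith)
      · fun_prop
      · intro z hz; simp only [Set.mem_Ioi] at hz; positivity
  have h3 : ContinuousOn (fun z => (1/x) * (polylog n (-(z/(x+1))) / z)) (Ioi (0:ℝ)) := by
    apply ContinuousOn.mul continuousOn_const
    apply ContinuousOn.div
    · exact contOn_polylog_comp (by fun_prop) (fun z hz => by
        simp only [Set.mem_Ioi] at hz
        have : 0 ≤ z/(x+1) := by positivity
        linarith)
    · fun_prop
    · intro z hz; simp only [Set.mem_Ioi] at hz; positivity
  exact (h1.add h2).sub h3

lemma abs_Hd_le (n : ℕ) {x z : ℝ} (hx : 0 < x) (hz : 0 < z) :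
    |Hd n x z| ≤ 3 / x := by
  have hxz : 0 < x + z := by linarith
  have hx1 : 0 < x + 1 := by linarith
  unfold Hd
  apply le_trans (abs_triple _ _ _)
  have T1 : |polylog (n+1) (-(x+z)) / (x+z)^2| ≤ 1/x := by
    rw [abs_div, abs_of_pos (by positivity : (0:ℝ) < (x+z)^2)]
    rw [div_le_div_iff₀ (by positivity) hx]
    have := abs_polylog_neg_le (n := n+1) hxz.le
    nlinarith
  have T2 : |(1/x - 1/(x+z)) * (polylog n (-(x+z)) / (x+z))| ≤ 1/x := by
    rw [abs_mul]
    have h1 : |1/x - 1/(x+z)| ≤ 1/x := by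
      rw [abs_of_nonneg (by
        rw [sub_nonneg]
        apply div_le_div_of_nonneg_left one_pos.le hx
        linarith)]
      have : 0 < 1/(x+z) := by positivity
      linarith
    have h2 : |polylog n (-(x+z)) / (x+z)| ≤ 1 := by
      rw [abs_div, abs_of_pos hxz, div_le_one hxz]
      exact abs_polylog_neg_le hxz.le
    calc |1/x - 1/(x+z)| * |polylog n (-(x+z)) / (x+z)|
        ≤ (1/x) * 1 := mul_le_mul h1 h2 (abs_nonneg _) (by positivity)
      _ = 1/x := by ring
  have T3 : |(1/x) * (polylog n (-(z/(x+1))) / z)| ≤ 1/x := by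
    rw [abs_mul, abs_of_pos (by positivity : (0:ℝ) < 1/x)]
    have h2 : |polylog n (-(z/(x+1))) / z| ≤ 1 := by
      rw [abs_div, abs_of_pos hz, div_le_one hz]
      have h3 := abs_polylog_neg_le (n := n) (s := z/(x+1)) (by positivity)
      calc |polylog n (-(z/(x+1)))| ≤ z/(x+1) := h3
        _ ≤ z := by
            rw [div_le_iff₀ hx1]; nlinarith
    calc (1/x) * |polylog n (-(z/(x+1))) / z| ≤ (1/x) * 1 := by
          apply mul_le_mul_of_nonneg_left h2 (by positivity)
      _ = 1/x := by ring
  have h3x : (3:ℝ)/x = 1/x + 1/x + 1/x := by ring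
  linarith

lemma Hd_intervalIntegrable (n : ℕ) {x Z : ℝ} (hx : 0 < x) (hZ : 0 < Z) :
    IntervalIntegrable (Hd n x) volume 0 Z := by
  rw [intervalIntegrable_iff, Set.uIoc_of_le hZ.le]
  apply Integrable.mono' (g := fun _ => 3/x)
    (integrableOn_const measure_Ioc_lt_top.ne)
  · exact ((Hd_continuousOn_z n hx).mono Ioc_subset_Ioi_self).aestronglyMeasurable
      measurableSet_Ioc
  · filter_upwards [ae_restrict_mem measurableSet_Ioc] with z hzz
    exact abs_Hd_le n hx hzz.1

lemma Ff_continuousOn_z {m : ℕ} {x Z : ℝ} (hx : 0 < x) :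
    ContinuousOn (fun z => Ff m z x) (Icc (0:ℝ) Z) := by
  unfold Ff
  have h1 : ContinuousOn (fun z : ℝ => 1/x - 1/(x+z)) (Icc (0:ℝ) Z) := by
    apply ContinuousOn.sub continuousOn_const
    apply ContinuousOn.div continuousOn_const (by fun_prop)
    intro z hz; have := hz.1; positivity
  have h2 : ContinuousOn (fun z => polylog m (-(x+z))) (Icc (0:ℝ) Z) :=
    contOn_polylog_comp (by fun_prop) (fun z hz => by linarith [hz.1])
  have h3 : ContinuousOn (fun z => polylog m (-(z/(x+1)))) (Icc (0:ℝ) Z) :=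
    contOn_polylog_comp (by fun_prop) (fun z hz => by
      have h4 : 0 ≤ z/(x+1) := by
        apply div_nonneg hz.1; linarith
      linarith)
  exact (h1.mul h2).sub (continuousOn_const.mul h3)

lemma Ff_eq_integral_Hd {n : ℕ} {x Z : ℝ} (hx : 0 < x) (hZ : 0 < Z) :
    ∫ z in (0:ℝ)..Z, Hd n x z = Ff (n+1) Z x := by
  have key := intervalIntegral.integral_eq_sub_of_hasDeriv_right_of_le hZ.le
    (Ff_continuousOn_z (m := n+1) (Z := Z) hx)
    (fun t ht => (hasDerivAt_Ff hx ht.1).hasDerivWithinAt)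
    (Hd_intervalIntegrable n hx hZ)
  rw [key, Ff_zero, sub_zero]
lemma hasDerivAt_polylog_neg_add (k : ℕ) {z s : ℝ} (h : 0 < s + z) :
    HasDerivAt (fun s => polylog k (-(s+z))) (pld k (s+z)) s := by
  have hA : HasDerivAt (fun s : ℝ => s + z) 1 s := (hasDerivAt_id s).add_const z
  have h2 := (hasDerivAt_polylog_neg k h).comp s hA
  have e1 : ((fun u => polylog k (-u)) ∘ fun s : ℝ => s + z)
      = fun s => polylog k (-(s+z)) := rfl
  rw [e1, mul_one] at h2
  exact h2

lemma hasDerivAt_polylog_neg_div (k : ℕ) {z s : ℝ} (hz : 0 < z) (hs : 0 ≤ s) :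
    HasDerivAt (fun s => polylog k (-(z/(s+1))))
      (pld k (z/(s+1)) * (z * (-1/(s+1)^2))) s := by
  have hs1 : (0:ℝ) < s + 1 := by linarith
  have hq : HasDerivAt (fun s : ℝ => z/(s+1)) (z * (-1/(s+1)^2)) s := by
    have h1 : HasDerivAt (fun s : ℝ => s + 1) 1 s := (hasDerivAt_id s).add_const 1
    have h2 := (h1.inv (ne_of_gt hs1)).const_mul z
    have e : (fun s : ℝ => z * (s+1)⁻¹) = fun s : ℝ => z/(s+1) := by
      funext u; rw [div_eq_mul_inv]
    rw [← e]
    exact h2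
  have h3 := (hasDerivAt_polylog_neg k (by positivity : 0 < z/(s+1))).comp s hq
  have e1 : ((fun u => polylog k (-u)) ∘ fun s : ℝ => z/(s+1))
      = fun s => polylog k (-(z/(s+1))) := rfl
  rw [e1] at h3
  exact h3

noncomputable def Kc (n : ℕ) (Z : ℝ) : ℝ := (2^(n+2) + Z + 4) * (Real.sqrt Z + 1)

set_option maxHeartbeats 1000000 in
lemma abs_Hd_bound (n : ℕ) {Z x z : ℝ} (hZ : 0 < Z) (hx : 0 < x) (hz0 : 0 < z)
    (hzZ : z ≤ Z) :
    |Hd n x z| ≤ Kc n Z *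
      ((if x ≤ 1 then (Real.sqrt x)⁻¹ else (Real.sqrt x)⁻¹ * x⁻¹) * (Real.sqrt z)⁻¹) := by
  have hxz : 0 < x + z := by linarith
  set a := Real.sqrt x with ha
  set b := Real.sqrt z with hb
  set c := Real.sqrt Z with hcdef
  have ha0 : 0 < a := Real.sqrt_pos.mpr hx
  have hb0 : 0 < b := Real.sqrt_pos.mpr hz0
  have hc0 : 0 < c := Real.sqrt_pos.mpr hZ
  have haa : a * a = x := Real.mul_self_sqrt hx.le
  have hbb : b * b = z := Real.mul_self_sqrt hz0.le
  have hcc : c * c = Z := Real.mul_self_sqrt hZ.le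
  have hbc : b ≤ c := Real.sqrt_le_sqrt hzZ
  have hamgm : a * b ≤ x + z := by nlinarith [sq_nonneg (a - b)]
  have hpow : (0:ℝ) < 2^(n+2) := by positivity
  rcases le_or_gt x 1 with hx1 | hx1
  · rw [if_pos hx1]
    rcases le_or_gt z x with hzx | hxz2
    · -- z ≤ x ≤ 1 : crude bound 3/x suffices
      have h1 := abs_Hd_le n hx hz0
      have hba : b ≤ a := Real.sqrt_le_sqrt hzx
      have h2 : 3 / x ≤ 3 / (a * b) :=
        div_le_div_of_nonneg_left (by norm_num) (by positivity) (by nlinarith)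
      have h3 : (3:ℝ) ≤ Kc n Z := by
        unfold Kc
        nlinarith [hpow, hc0, mul_pos hZ hc0, mul_pos hpow hc0]
      calc |Hd n x z| ≤ 3 / (a*b) := le_trans h1 h2
        _ = 3 * (a⁻¹ * b⁻¹) := by rw [← mul_inv]; ring
        _ ≤ Kc n Z * (a⁻¹ * b⁻¹) := by
            apply mul_le_mul_of_nonneg_right h3 (by positivity)
    · -- x ≤ z : mean value theorem case
      set bfun : ℝ → ℝ :=
        fun s => z * (polylog n (-(s+z)) / (s+z)^2) - polylog n (-(z/(s+1))) / z
        with hbfun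
      set bd : ℝ → ℝ := fun s =>
        z * ((pld n (s+z) * (s+z)^2 - polylog n (-(s+z)) * (2*(s+z))) / ((s+z)^2)^2)
          - pld n (z/(s+1)) * (z * (-1/(s+1)^2)) / z with hbd
      have hderiv : ∀ s ∈ Icc (0:ℝ) x, HasDerivWithinAt bfun (bd s) (Icc 0 x) s := by
        intro s hs
        have hsz : 0 < s + z := by linarith [hs.1]
        have q1 := hasDerivAt_polylog_neg_add n hsz
        have q2 : HasDerivAt (fun s : ℝ => (s+z)^2) (2*(s+z)) s := by
          have := ((hasDerivAt_id s).add_const z).pow 2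
          simp at this; exact this
        have q3 := (q1.div q2 (by positivity)).const_mul z
        have q4 := (hasDerivAt_polylog_neg_div n hz0 hs.1).div_const z
        exact (q3.sub q4).hasDerivWithinAt
      have hbound : ∀ s ∈ Icc (0:ℝ) x, ‖bd s‖ ≤ 3/z + 1 := by
        intro s hs
        have hs0 : 0 ≤ s := hs.1
        have hsz : 0 < s + z := by linarith
        have hs1 : (0:ℝ) < s + 1 := by linarith
        have hpld1 := pld_norm_le n hsz
        have hpld2 := pld_norm_le n (by positivity : 0 < z/(s+1))
        have hP := abs_polylog_neg_le (n := n) hsz.le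
        have hQ : |pld n (s+z) * (s+z)^2 - polylog n (-(s+z)) * (2*(s+z))|
            ≤ 3 * (s+z)^2 := by
          apply le_trans (abs_sub _ _)
          rw [abs_mul, abs_mul]
          have e1 : |(s+z)^2| = (s+z)^2 := abs_of_pos (by positivity)
          have e2 : |2*(s+z)| = 2*(s+z) := abs_of_pos (by positivity)
          rw [e1, e2]
          nlinarith [abs_nonneg (polylog n (-(s+z))), abs_nonneg (pld n (s+z))]
        have part1 : |z * ((pld n (s+z) * (s+z)^2 - polylog n (-(s+z)) * (2*(s+z)))
            / ((s+z)^2)^2)| ≤ 3/z := by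
          rw [abs_mul, abs_of_pos hz0, abs_div,
            abs_of_pos (by positivity : (0:ℝ) < ((s+z)^2)^2)]
          rw [← mul_div_assoc]
          rw [div_le_div_iff₀ (by positivity) hz0]
          have c1 : z * |pld n (s+z) * (s+z)^2 - polylog n (-(s+z)) * (2*(s+z))| * z
              ≤ z * (3*(s+z)^2) * z := by
            apply mul_le_mul_of_nonneg_right
              (mul_le_mul_of_nonneg_left hQ hz0.le) hz0.le
          have c3 : z*z ≤ (s+z)*(s+z) := by nlinarith
          nlinarith [c1, c3, sq_nonneg (s+z)]
        have part2 : |pld n (z/(s+1)) * (z * (-1/(s+1)^2)) / z| ≤ 1 := by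
          rw [abs_div, abs_of_pos hz0, abs_mul, abs_mul]
          have e3 : |(-1/(s+1)^2 : ℝ)| = 1/(s+1)^2 := by
            rw [abs_div, abs_neg, abs_one, abs_of_pos (by positivity)]
          rw [e3, abs_of_pos hz0, div_le_one hz0]
          have h4 : z * (1/(s+1)^2) ≤ z := by
            have : (1:ℝ)/(s+1)^2 ≤ 1 := by
              rw [div_le_one (by positivity)]; nlinarith
            nlinarith
          nlinarith [abs_nonneg (pld n (z/(s+1)))]
        rw [Real.norm_eq_abs, hbd]
        apply le_trans (abs_sub _ _)
        linarith
      have hMVT := Convex.norm_image_sub_le_of_norm_hasDerivWithin_le hderiv hbound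
        (convex_Icc 0 x) (Set.left_mem_Icc.mpr hx.le) (Set.right_mem_Icc.mpr hx.le)
      have hb0eq : bfun 0 = 0 := by
        rw [hbfun]
        show z * (polylog n (-(0+z)) / (0+z)^2) - polylog n (-(z/(0+1))) / z = 0
        rw [zero_add, zero_add, div_one]
        field_simp
        ring
      have hbx : |bfun x| ≤ (3/z + 1) * x := by
        have := hMVT
        rw [hb0eq, sub_zero, sub_zero, Real.norm_eq_abs, Real.norm_eq_abs,
          abs_of_pos hx] at this
        exact this
      have hsplit : Hd n x z = polylog (n+1) (-(x+z)) / (x+z)^2 + bfun x / x := by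
        rw [hbfun]
        show Hd n x z = polylog (n+1) (-(x+z)) / (x+z)^2
          + (z * (polylog n (-(x+z)) / (x+z)^2) - polylog n (-(z/(x+1))) / z) / x
        unfold Hd
        field_simp
        ring
      have T1b : |polylog (n+1) (-(x+z)) / (x+z)^2| ≤ (a*b)⁻¹ := by
        rw [abs_div, abs_of_pos (by positivity : (0:ℝ) < (x+z)^2), inv_eq_one_div,
          div_le_div_iff₀ (by positivity) (by positivity)]
        have hple := abs_polylog_neg_le (n := n+1) hxz.le
        nlinarith [mul_le_mul hple hamgm (by positivity : (0:ℝ) ≤ a*b)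
          hxz.le]
      have T2b : |bfun x / x| ≤ 3/z + 1 := by
        rw [abs_div, abs_of_pos hx, div_le_iff₀ hx]
        exact hbx
      have hab : a ≤ b := Real.sqrt_le_sqrt hxz2.le
      have coef : (3:ℝ)/z + 1 ≤ (3+Z) * (a*b)⁻¹ := by
        rw [inv_eq_one_div, mul_one_div, div_add' _ _ _ (ne_of_gt hz0),
          div_le_div_iff₀ hz0 (by positivity)]
        nlinarith [mul_le_mul_of_nonneg_right hab hb0.le]
      have hKb : (1:ℝ) + (3+Z) ≤ Kc n Z := by
        unfold Kc
        nlinarith [hpow, hc0, mul_pos hZ hc0, mul_pos hpow hc0]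
      calc |Hd n x z| ≤ |polylog (n+1) (-(x+z)) / (x+z)^2| + |bfun x / x| := by
            rw [hsplit]; exact abs_add_le _ _
        _ ≤ (a*b)⁻¹ + (3+Z) * (a*b)⁻¹ := by linarith
        _ = (1 + (3+Z)) * (a*b)⁻¹ := by ring
        _ ≤ Kc n Z * (a*b)⁻¹ := by
            apply mul_le_mul_of_nonneg_right hKb (by positivity)
        _ = Kc n Z * (a⁻¹ * b⁻¹) := by rw [← mul_inv]
  · -- tail case x > 1
    rw [if_neg (not_le.mpr hx1)]
    have ha1 : 1 ≤ a := by
      rw [ha]; rw [show (1:ℝ) = Real.sqrt 1 by simp]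
      exact Real.sqrt_le_sqrt hx1.le
    have hax : a ≤ x := by nlinarith
    set d := Real.sqrt (x+z) with hd
    have hd0 : 0 < d := Real.sqrt_pos.mpr hxz
    have hdd : d * d = x + z := Real.mul_self_sqrt hxz.le
    have had : a ≤ d := Real.sqrt_le_sqrt (by linarith)
    have hP1 : |polylog (n+1) (-(x+z))| ≤ 2^(n+2) * d := by
      have h := abs_polylog_neg_le_sqrt (n+1) (x+z) hxz.le
      calc |polylog (n+1) (-(x+z))| ≤ 2^(n+1+1) * Real.sqrt (x+z) := h
        _ = 2^(n+2) * d := by norm_num [hd]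
    have hT1 : |polylog (n+1) (-(x+z)) / (x+z)^2| ≤ (2^(n+2) * c) / (a * x * b) := by
      rw [abs_div, abs_of_pos (by positivity : (0:ℝ) < (x+z)^2),
        div_le_div_iff₀ (by positivity) (by positivity)]
      calc |polylog (n+1) (-(x+z))| * (a*x*b) ≤ (2^(n+2)*d) * (a*x*b) := by
            apply mul_le_mul_of_nonneg_right hP1 (by positivity)
        _ ≤ (2^(n+2)*d) * (d*x*b) := by
            apply mul_le_mul_of_nonneg_left _ (by positivity)
            apply mul_le_mul_of_nonneg_right
              (mul_le_mul_of_nonneg_right had hx.le) hb0.le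
        _ = 2^(n+2) * ((d*d)*(x*b)) := by ring
        _ = 2^(n+2) * ((x+z)*(x*b)) := by rw [hdd]
        _ ≤ 2^(n+2) * ((x+z)*((x+z)*c)) := by
            apply mul_le_mul_of_nonneg_left _ (by positivity)
            apply mul_le_mul_of_nonneg_left _ hxz.le
            apply mul_le_mul (by linarith) hbc hb0.le (by positivity)
        _ = 2^(n+2)*c*(x+z)^2 := by ring
    have hcoef_eq : 1/x - 1/(x+z) = z/(x*(x+z)) := by
      field_simp
      try ring
    have hT2 : |(1/x - 1/(x+z)) * (polylog n (-(x+z)) / (x+z))| ≤ Z / (a * x * b) := by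
      rw [abs_mul, hcoef_eq, abs_div, abs_of_pos (by positivity : (0:ℝ) < x*(x+z)),
        abs_of_pos hz0]
      have h2 : |polylog n (-(x+z)) / (x+z)| ≤ 1 := by
        rw [abs_div, abs_of_pos hxz, div_le_one hxz]
        exact abs_polylog_neg_le hxz.le
      calc z/(x*(x+z)) * |polylog n (-(x+z)) / (x+z)| ≤ z/(x*(x+z)) * 1 := by
            apply mul_le_mul_of_nonneg_left h2 (by positivity)
        _ = z/(x*(x+z)) := by ring
        _ ≤ Z / (a * x * b) := by
            rw [div_le_div_iff₀ (by positivity) (by positivity)]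
            nlinarith [mul_le_mul hzZ hamgm (by positivity : (0:ℝ) ≤ a*b) hZ.le]
    have hT3 : |(1/x) * (polylog n (-(z/(x+1))) / z)| ≤ c / (a * x * b) := by
      rw [abs_mul, abs_of_pos (by positivity : (0:ℝ) < 1/x)]
      have h2 : |polylog n (-(z/(x+1))) / z| ≤ 1/(x+1) := by
        rw [abs_div, abs_of_pos hz0, div_le_div_iff₀ hz0 (by positivity)]
        have h3 := abs_polylog_neg_le (n := n) (s := z/(x+1)) (by positivity)
        calc |polylog n (-(z/(x+1)))| * (x+1) ≤ (z/(x+1)) * (x+1) := by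
              apply mul_le_mul_of_nonneg_right h3 (by positivity)
          _ = z := by field_simp
          _ = 1 * z := by ring
      calc (1/x) * |polylog n (-(z/(x+1))) / z| ≤ (1/x) * (1/(x+1)) := by
            apply mul_le_mul_of_nonneg_left h2 (by positivity)
        _ = 1/(x*(x+1)) := by rw [div_mul_div_comm, one_mul]
        _ ≤ c / (a * x * b) := by
            rw [div_le_div_iff₀ (by positivity) (by positivity)]
            have hbc' : a * b ≤ (x+1) * c := by
              apply mul_le_mul (by linarith) hbc hb0.le (by positivity)
            nlinarith [mul_le_mul_of_nonneg_left hbc' hx.le]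
    have hsum : |Hd n x z| ≤ (2^(n+2)*c + Z + c) / (a * x * b) := by
      unfold Hd
      apply le_trans (abs_triple _ _ _)
      have : (2^(n+2)*c + Z + c) / (a * x * b)
          = (2^(n+2)*c)/(a*x*b) + Z/(a*x*b) + c/(a*x*b) := by ring
      rw [this]
      linarith
    have hKb : 2^(n+2)*c + Z + c ≤ Kc n Z := by
      unfold Kc
      nlinarith [hpow, hc0, mul_pos hZ hc0, mul_pos hpow hc0]
    calc |Hd n x z| ≤ (2^(n+2)*c + Z + c) / (a * x * b) := hsum
      _ ≤ Kc n Z / (a * x * b) := by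
          gcongr
      _ = Kc n Z * ((a⁻¹ * x⁻¹) * b⁻¹) := by
          rw [div_eq_mul_inv, mul_inv, mul_inv]
lemma Hd_continuousOn_prod (n : ℕ) :
    ContinuousOn (fun p : ℝ × ℝ => Hd n p.1 p.2) (Ioi (0:ℝ) ×ˢ Ioi (0:ℝ)) := by
  have hmem : ∀ p : ℝ × ℝ, p ∈ Ioi (0:ℝ) ×ˢ Ioi (0:ℝ) → 0 < p.1 ∧ 0 < p.2 := by
    intro p hp
    exact ⟨(Set.mem_prod.mp hp).1, (Set.mem_prod.mp hp).2⟩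
  unfold Hd
  have h1 : ContinuousOn (fun p : ℝ × ℝ => polylog (n+1) (-(p.1+p.2)) / (p.1+p.2)^2)
      (Ioi (0:ℝ) ×ˢ Ioi (0:ℝ)) := by
    apply ContinuousOn.div
    · exact contOn_polylog_comp (by fun_prop) (fun p hp => by
        obtain ⟨h1, h2⟩ := hmem p hp; linarith)
    · fun_prop
    · intro p hp; obtain ⟨h1, h2⟩ := hmem p hp; positivity
  have h2 : ContinuousOn
      (fun p : ℝ × ℝ => (1/p.1 - 1/(p.1+p.2)) * (polylog n (-(p.1+p.2)) / (p.1+p.2)))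
      (Ioi (0:ℝ) ×ˢ Ioi (0:ℝ)) := by
    apply ContinuousOn.mul
    · apply ContinuousOn.sub
      · apply ContinuousOn.div continuousOn_const (by fun_prop)
        intro p hp; obtain ⟨h1, h2⟩ := hmem p hp; positivity
      · apply ContinuousOn.div continuousOn_const (by fun_prop)
        intro p hp; obtain ⟨h1, h2⟩ := hmem p hp; positivity
    · apply ContinuousOn.div
      · exact contOn_polylog_comp (by fun_prop) (fun p hp => by
          obtain ⟨h1, h2⟩ := hmem p hp; linarith)
      · fun_prop
      · intro p hp; obtain ⟨h1, h2⟩ := hmem p hp; positivity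
  have h3 : ContinuousOn
      (fun p : ℝ × ℝ => (1/p.1) * (polylog n (-(p.2/(p.1+1))) / p.2))
      (Ioi (0:ℝ) ×ˢ Ioi (0:ℝ)) := by
    apply ContinuousOn.mul
    · apply ContinuousOn.div continuousOn_const (by fun_prop)
      intro p hp; obtain ⟨h1, h2⟩ := hmem p hp; positivity
    · apply ContinuousOn.div
      · apply contOn_polylog_comp
        · apply ContinuousOn.neg
          apply ContinuousOn.div (by fun_prop) (by fun_prop)
          intro p hp; obtain ⟨h1, h2⟩ := hmem p hp; positivity
        · intro p hp
          obtain ⟨h1, h2⟩ := hmem p hp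
          have : 0 ≤ p.2/(p.1+1) := by positivity
          linarith
      · fun_prop
      · intro p hp; obtain ⟨h1, h2⟩ := hmem p hp; positivity
  exact (h1.add h2).sub h3

lemma Hd_prod_integrable (n : ℕ) {Z : ℝ} (hZ : 0 < Z) :
    Integrable (fun p : ℝ × ℝ => Hd n p.1 p.2)
      ((volume.restrict (Ioi (0:ℝ))).prod (volume.restrict (Ioc (0:ℝ) Z))) := by
  have hdom : Integrable (fun p : ℝ × ℝ =>
      (Kc n Z * (if p.1 ≤ 1 then (Real.sqrt p.1)⁻¹ else (Real.sqrt p.1)⁻¹ * p.1⁻¹))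
        * (Real.sqrt p.2)⁻¹)
      ((volume.restrict (Ioi (0:ℝ))).prod (volume.restrict (Ioc (0:ℝ) Z))) :=
    Integrable.mul_prod (phi_integrable.const_mul (Kc n Z)) (psi_integrable Z)
  have hsub : Ioi (0:ℝ) ×ˢ Ioc (0:ℝ) Z ⊆ Ioi (0:ℝ) ×ˢ Ioi (0:ℝ) :=
    Set.prod_mono subset_rfl Ioc_subset_Ioi_self
  apply hdom.mono'
  · rw [Measure.prod_restrict]
    exact ((Hd_continuousOn_prod n).mono hsub).aestronglyMeasurable
      (measurableSet_Ioi.prod measurableSet_Ioc)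
  · rw [Measure.prod_restrict]
    filter_upwards [ae_restrict_mem (measurableSet_Ioi.prod measurableSet_Ioc)] with p hp
    obtain ⟨hp1, hp2⟩ := Set.mem_prod.mp hp
    have hb := abs_Hd_bound n hZ hp1 hp2.1 hp2.2
    rw [Real.norm_eq_abs]
    calc |Hd n p.1 p.2| ≤ Kc n Z *
          ((if p.1 ≤ 1 then (Real.sqrt p.1)⁻¹ else (Real.sqrt p.1)⁻¹ * p.1⁻¹)
            * (Real.sqrt p.2)⁻¹) := hb
      _ = (Kc n Z * (if p.1 ≤ 1 then (Real.sqrt p.1)⁻¹ else (Real.sqrt p.1)⁻¹ * p.1⁻¹))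
            * (Real.sqrt p.2)⁻¹ := by rw [mul_assoc]

theorem aux_main (n : ℕ) : ∀ z : ℝ, 0 < z →
    IntegrableOn (fun x => Ff n z x) (Ioi (0:ℝ)) ∧
    ∫ x in Ioi (0:ℝ), Ff n z x = n * polylog (n+1) (-z) := by
  induction n with
  | zero =>
    intro z hz
    have hzero : ∀ x ∈ Ioi (0:ℝ), Ff 0 z x = 0 := by
      intro x hx
      simp only [Set.mem_Ioi] at hx
      have hx1 : (0:ℝ) < x + 1 := by linarith
      have hxz : (0:ℝ) < x + z := by linarith
      show (1/x - 1/(x+z)) * ((-(x+z)) / (1 - (-(x+z))))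
        - (1/x) * ((-(z/(x+1))) / (1 - (-(z/(x+1))))) = 0
      have hq : (0:ℝ) ≤ z/(x+1) := by positivity
      rw [sub_neg_eq_add, sub_neg_eq_add, neg_div, neg_div]
      have hne1 : x ≠ 0 := ne_of_gt hx
      have hne2 : x + z ≠ 0 := ne_of_gt hxz
      have hne3 : (1:ℝ) + (x+z) ≠ 0 := ne_of_gt (by linarith)
      have hne4 : x + 1 ≠ 0 := ne_of_gt hx1
      have hne6 : (1:ℝ) + z/(x+1) ≠ 0 := ne_of_gt (by linarith)
      field_simp
      try ring
    constructor
    · exact (integrableOn_zero).congr_fun (fun x hx => (hzero x hx).symm) measurableSet_Ioi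
    · rw [setIntegral_congr_fun measurableSet_Ioi hzero]
      simp
  | succ n ih =>
    intro Z hZ
    have hprod := Hd_prod_integrable n hZ
    have hswap := MeasureTheory.integral_integral_swap (f := fun x y => Hd n x y) hprod
    have hL : EqOn (fun x => ∫ z in Ioc (0:ℝ) Z, Hd n x z)
        (fun x => Ff (n+1) Z x) (Ioi (0:ℝ)) := by
      intro x hx
      simp only
      rw [← intervalIntegral.integral_of_le hZ.le]
      exact Ff_eq_integral_Hd hx hZ
    have hR : EqOn (fun z => ∫ x in Ioi (0:ℝ), Hd n x z)
        (fun z => ((n:ℝ)+1) * polylog (n+1) (-z) / z) (Ioc (0:ℝ) Z) := by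
      intro z hzz
      have hz0 : 0 < z := hzz.1
      simp only
      have e1 : EqOn (fun x => Hd n x z)
          (fun x => (1/z) * Ff n z x
            + (polylog (n+1) (-(x+z)) - polylog n (-(x+z))) / (x+z)^2) (Ioi (0:ℝ)) :=
        fun x hx => Hd_eq hx hz0
      rw [setIntegral_congr_fun measurableSet_Ioi e1]
      rw [integral_add ((ih z hz0).1.const_mul (1/z)) (tail_integrableOn n hz0)]
      rw [MeasureTheory.integral_const_mul, (ih z hz0).2, tail_eval n hz0]
      field_simp
    have hIntegral : ∫ x in Ioi (0:ℝ), Ff (n+1) Z x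
        = ((n:ℕ)+1 : ℕ) * polylog (n+1+1) (-Z) := by
      calc ∫ x in Ioi (0:ℝ), Ff (n+1) Z x
          = ∫ x in Ioi (0:ℝ), ∫ z in Ioc (0:ℝ) Z, Hd n x z :=
            (setIntegral_congr_fun measurableSet_Ioi hL).symm
        _ = ∫ z in Ioc (0:ℝ) Z, ∫ x in Ioi (0:ℝ), Hd n x z := hswap
        _ = ∫ z in Ioc (0:ℝ) Z, ((n:ℝ)+1) * polylog (n+1) (-z) / z :=
            setIntegral_congr_fun measurableSet_Ioc hR
        _ = ∫ z in (0:ℝ)..Z, ((n:ℝ)+1) * polylog (n+1) (-z) / z :=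
            (intervalIntegral.integral_of_le hZ.le).symm
        _ = ((n:ℝ)+1) * ∫ z in (0:ℝ)..Z, polylog (n+1) (-z) / z := by
            rw [← intervalIntegral.integral_const_mul]
            apply intervalIntegral.integral_congr
            intro z _
            ring
        _ = ((n:ℝ)+1) * polylog (n+1+1) (-Z) := by rw [← polylog_neg_eq (n+1) Z]
        _ = ((n:ℕ)+1 : ℕ) * polylog (n+1+1) (-Z) := by push_cast; ring
    constructor
    · have hml := hprod.integral_prod_left
      apply hml.congr
      filter_upwards [ae_restrict_mem measurableSet_Ioi] with x hx
      exact hL hx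
    · exact hIntegral

/-- For every `n ≥ 1` and `z ≥ 0`:
`∫₀^∞ [ (1/x − 1/(x+z))·Liₙ(−x−z) − (1/x)·Liₙ(−z/(x+1)) ] dx = n·Li_{n+1}(−z)`. -/
theorem bubble_chain_identity (n : ℕ) (hn : 1 ≤ n) (z : ℝ) (hz : 0 ≤ z) :
    ∫ x in Set.Ioi (0 : ℝ),
        ((1 / x - 1 / (x + z)) * polylog n (-x - z) -
          (1 / x) * polylog n (-z / (x + 1))) =
      (n : ℝ) * polylog (n + 1) (-z) := by
  rcases eq_or_lt_of_le hz with h | h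
  · -- z = 0
    subst h
    have h0 : ∀ x ∈ Ioi (0:ℝ), (1 / x - 1 / (x + 0)) * polylog n (-x - 0) -
          (1 / x) * polylog n (-0 / (x + 1)) = 0 := by
      intro x _
      rw [add_zero, sub_self, zero_mul, neg_zero, zero_div, polylog_zero,
        mul_zero, sub_zero]
    rw [setIntegral_congr_fun measurableSet_Ioi h0]
    simp [polylog_zero]
  · have key := (aux_main n z h).2
    have heq : EqOn (fun x => (1 / x - 1 / (x + z)) * polylog n (-x - z) -
          (1 / x) * polylog n (-z / (x + 1))) (fun x => Ff n z x) (Ioi (0:ℝ)) := by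
      intro x _
      simp only
      unfold Ff
      have e1 : -x - z = -(x+z) := by ring
      have e2 : -z/(x+1) = -(z/(x+1)) := by rw [neg_div]
      rw [e1, e2]
    rw [setIntegral_congr_fun measurableSet_Ioi heq, key]
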